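/- For every 1 ≤ h ≤ 2^r, the family (X_0, X_1, …, X_{h−1}) is a basis of the F-vector space of polynomials in F[X] of degree less than h; equivalently, every f ∈ F[X] with deg f < h can be written in exactly one way as f = Σ_{i=0}^{h−1} d_i·X_i with d_0, …, d_{h−1} ∈ F. -/

import Mathlib

open Polynomial Finset

attribute [local instance] ZMod.algebra

/-- `ω_i = Σ_{j<r} i_j · v_j`, where `i_j` are the binary digits of `i`. -/
noncomputable def omegaF {F : Type*} [Field F] {r : ℕ} (v : Fin r → F) (i : ℕ) : F :=
  ∑ j : Fin r, if Nat.testBit i (j : ℕ) then v j else 0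

/-- The subspace vanishing polynomial `W_j(X) = ∏_{i=0}^{2^j-1} (X - ω_i)`. -/
noncomputable def Wpoly {F : Type*} [Field F] {r : ℕ} (v : Fin r → F) (j : ℕ) : Polynomial F :=
  ∏ i ∈ Finset.range (2 ^ j), (Polynomial.X - Polynomial.C (omegaF v i))

/-- The basis polynomial `X_i(X) = ∏_{j<r} (W_j(X)/W_j(ω_{2^j}))^{i_j}`. -/
noncomputable def Xpoly {F : Type*} [Field F] {r : ℕ} (v : Fin r → F) (i : ℕ) : Polynomial F :=
  ∏ j ∈ Finset.range r,
    if Nat.testBit i j then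
      Polynomial.C (((Wpoly v j).eval (omegaF v (2 ^ j)))⁻¹) * Wpoly v j
    else 1

/-- The recursively defined polynomials `Δ_i^m`:
`Δ_t^m = C (d m)` and `Δ_i^m = Δ_{i+1}^m + (W_i/W_i(ω_{2^i})) · Δ_{i+1}^{m+2^i}` for `i < t`. -/
noncomputable def Delta {F : Type*} [Field F] {r : ℕ} (v : Fin r → F) (d : ℕ → F)
    (t i m : ℕ) : Polynomial F :=
  if i < t then
    Delta v d t (i + 1) m +
      Polynomial.C (((Wpoly v i).eval (omegaF v (2 ^ i)))⁻¹) * Wpoly v i *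
        Delta v d t (i + 1) (m + 2 ^ i)
  else Polynomial.C (d m)
termination_by t - i
decreasing_by all_goals omega

/-- The constant `W'_l = (∏_{j=1}^{2^l-1} ω_j) / W_l(ω_{2^l})`. -/
noncomputable def Wd {F : Type*} [Field F] {r : ℕ} (v : Fin r → F) (l : ℕ) : F :=
  (∏ j ∈ Finset.Ico 1 (2 ^ l), omegaF v j) / (Wpoly v l).eval (omegaF v (2 ^ l))

section Aux

variable {F : Type*} [Field F] [CharP F 2] {r : ℕ} {v : Fin r → F}

set_option linter.unusedSectionVars false

lemma degree_Cmul_le (a : F) (p : Polynomial F) : (Polynomial.C a * p).degree ≤ p.degree :=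
  calc (Polynomial.C a * p).degree ≤ (Polynomial.C a).degree + p.degree := degree_mul_le _ _
    _ ≤ 0 + p.degree := add_le_add degree_C_le le_rfl
    _ = p.degree := zero_add _

lemma bitSum_eq (r : ℕ) : ∀ i : ℕ, i < 2 ^ r →
    (∑ j ∈ Finset.range r, if Nat.testBit i j then 2 ^ j else 0) = i := by
  induction r with
  | zero => intro i hi; interval_cases i; simp
  | succ n ih =>
    intro i hi
    rw [Finset.sum_range_succ' (fun j => if Nat.testBit i j then 2 ^ j else 0)]
    have h1 : ∀ j, Nat.testBit i (j + 1) = Nat.testBit (i / 2) j := by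
      intro j; rw [Nat.testBit_add_one]
    have h2 : (∑ j ∈ Finset.range n, if Nat.testBit i (j + 1) then 2 ^ (j + 1) else 0)
        = 2 * ∑ j ∈ Finset.range n, if Nat.testBit (i / 2) j then 2 ^ j else 0 := by
      rw [Finset.mul_sum]
      refine Finset.sum_congr rfl fun j _ => ?_
      rw [h1]; split <;> ring
    rw [h2, ih (i / 2) (by omega)]
    have h3 : Nat.testBit i 0 = decide (i % 2 = 1) := Nat.testBit_zero i
    rcases Nat.mod_two_eq_zero_or_one i with h | h <;>
      simp [h3, h] <;> omega

lemma omegaF_inj (hv : LinearIndependent (ZMod 2) v) {i k : ℕ} (hi : i < 2 ^ r)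
    (hk : k < 2 ^ r) (h : omegaF v i = omegaF v k) : i = k := by
  set g : Fin r → ZMod 2 := fun j => if Nat.testBit i (j : ℕ) = Nat.testBit k (j : ℕ) then 0 else 1
    with hg
  have hsum : ∑ j : Fin r, g j • v j = 0 := by
    have : ∑ j : Fin r, g j • v j = omegaF v i + omegaF v k := by
      rw [omegaF, omegaF, ← Finset.sum_add_distrib]
      refine Finset.sum_congr rfl fun j _ => ?_
      by_cases h1 : Nat.testBit i (j : ℕ) <;> by_cases h2 : Nat.testBit k (j : ℕ) <;>
        simp [hg, h1, h2, CharTwo.add_self_eq_zero]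
    rw [this, h, CharTwo.add_self_eq_zero]
  have hz := Fintype.linearIndependent_iff.mp hv g hsum
  refine Nat.eq_of_testBit_eq fun j => ?_
  by_cases hj : j < r
  · have := hz ⟨j, hj⟩
    simp only [hg] at this
    by_contra hne
    rw [if_neg (by simpa using hne)] at this
    exact one_ne_zero this
  · rw [Nat.testBit_lt_two_pow (lt_of_lt_of_le hi (Nat.pow_le_pow_right (by norm_num) (by omega))),
      Nat.testBit_lt_two_pow (lt_of_lt_of_le hk (Nat.pow_le_pow_right (by norm_num) (by omega)))]

lemma Wpoly_monic (v : Fin r → F) (j : ℕ) : (Wpoly v j).Monic :=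
  monic_prod_of_monic _ _ fun _ _ => monic_X_sub_C _

lemma Wpoly_natDegree (v : Fin r → F) (j : ℕ) : (Wpoly v j).natDegree = 2 ^ j := by
  rw [Wpoly, natDegree_prod _ _ fun i _ => X_sub_C_ne_zero _]
  simp

lemma Weval_ne_zero (hv : LinearIndependent (ZMod 2) v) {j : ℕ} (hj : j < r) :
    (Wpoly v j).eval (omegaF v (2 ^ j)) ≠ 0 := by
  rw [Wpoly, eval_prod]
  refine Finset.prod_ne_zero_iff.mpr fun i hi => ?_
  rw [Finset.mem_range] at hi
  simp only [eval_sub, eval_X, eval_C, sub_ne_zero]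
  intro heq
  have h2j : 2 ^ j < 2 ^ r := Nat.pow_lt_pow_right (by norm_num) hj
  exact absurd (omegaF_inj hv h2j (lt_trans hi h2j) heq) (by omega)

lemma Xpoly_factor_ne_zero (hv : LinearIndependent (ZMod 2) v) {i j : ℕ} (hj : j < r) :
    (if Nat.testBit i j then
      Polynomial.C (((Wpoly v j).eval (omegaF v (2 ^ j)))⁻¹) * Wpoly v j else 1) ≠ 0 := by
  split
  · exact mul_ne_zero (by simpa using inv_ne_zero (Weval_ne_zero hv hj))
      (Wpoly_monic v j).ne_zero
  · exact one_ne_zero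

lemma Xpoly_ne_zero (hv : LinearIndependent (ZMod 2) v) (i : ℕ) : Xpoly v i ≠ 0 :=
  Finset.prod_ne_zero_iff.mpr fun j hj =>
    Xpoly_factor_ne_zero hv (Finset.mem_range.mp hj)

lemma Xpoly_natDegree (hv : LinearIndependent (ZMod 2) v) {i : ℕ} (hi : i < 2 ^ r) :
    (Xpoly v i).natDegree = i := by
  rw [Xpoly, natDegree_prod _ _ fun j hj => Xpoly_factor_ne_zero hv (Finset.mem_range.mp hj)]
  calc (∑ j ∈ Finset.range r, (if Nat.testBit i j then
          Polynomial.C (((Wpoly v j).eval (omegaF v (2 ^ j)))⁻¹) * Wpoly v j else 1).natDegree)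
      = ∑ j ∈ Finset.range r, if Nat.testBit i j then 2 ^ j else 0 := by
        refine Finset.sum_congr rfl fun j hj => ?_
        split_ifs with hb
        · rw [natDegree_C_mul
            (by simpa using inv_ne_zero (Weval_ne_zero hv (Finset.mem_range.mp hj))),
            Wpoly_natDegree]
        · simp
    _ = i := bitSum_eq r i hi

lemma Xpoly_leading (hv : LinearIndependent (ZMod 2) v) {i : ℕ} (hi : i < 2 ^ r)
    (hdeg : (Xpoly v i).natDegree = i) : (Xpoly v i).coeff i ≠ 0 := by
  have h1 := Polynomial.leadingCoeff_ne_zero.mpr (Xpoly_ne_zero hv i)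
  rwa [Polynomial.leadingCoeff, hdeg] at h1

lemma Xpoly_degree (hv : LinearIndependent (ZMod 2) v) {i : ℕ} (hi : i < 2 ^ r) :
    (Xpoly v i).degree = (i : WithBot ℕ) := by
  rw [degree_eq_natDegree (Xpoly_ne_zero hv i), Xpoly_natDegree hv hi]

lemma sum_Xpoly_eq_zero (hv : LinearIndependent (ZMod 2) v) :
    ∀ h : ℕ, h ≤ 2 ^ r → ∀ d : Fin h → F,
      (∑ i : Fin h, Polynomial.C (d i) * Xpoly v (i : ℕ)) = 0 → ∀ i, d i = 0 := by
  intro h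
  induction h with
  | zero => intro _ _ _ i; exact i.elim0
  | succ n ih =>
    intro hle d hsum
    have hlast : d (Fin.last n) = 0 := by
      have hc := congrArg (fun p => Polynomial.coeff p n) hsum
      simp only [Fin.sum_univ_castSucc, Polynomial.coeff_add, Polynomial.finset_sum_coeff,
        Polynomial.coeff_zero] at hc
      have h1 : ∀ i : Fin n, (Polynomial.C (d i.castSucc) * Xpoly v (i.castSucc : ℕ)).coeff n
          = 0 := by
        intro i
        refine Polynomial.coeff_eq_zero_of_degree_lt ?_
        calc (Polynomial.C (d i.castSucc) * Xpoly v (i.castSucc : ℕ)).degree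
            ≤ (Xpoly v (i.castSucc : ℕ)).degree := degree_Cmul_le _ _
          _ = ((i : ℕ) : WithBot ℕ) := Xpoly_degree hv (by omega)
          _ < (n : WithBot ℕ) := by exact_mod_cast i.isLt
      rw [Finset.sum_eq_zero fun i _ => h1 i, zero_add, Polynomial.coeff_C_mul] at hc
      have hlc : (Xpoly v n).coeff n ≠ 0 :=
        Xpoly_leading hv (by omega) (Xpoly_natDegree hv (by omega))
      simpa using (mul_eq_zero.mp hc).resolve_right hlc
    have hrest : ∀ i : Fin n, d i.castSucc = 0 := by
      refine ih (by omega) (fun i => d i.castSucc) ?_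
      rw [Fin.sum_univ_castSucc, hlast] at hsum
      simpa using hsum
    intro i
    exact Fin.lastCases hlast hrest i

lemma exists_Xpoly_rep (hv : LinearIndependent (ZMod 2) v) :
    ∀ h : ℕ, h ≤ 2 ^ r → ∀ f : Polynomial F, f.degree < (h : WithBot ℕ) →
      ∃ d : Fin h → F, f = ∑ i : Fin h, Polynomial.C (d i) * Xpoly v (i : ℕ) := by
  intro h
  induction h with
  | zero =>
    intro _ f hf
    refine ⟨fun i => i.elim0, ?_⟩
    simp only [Nat.cast_zero] at hf
    rw [Finset.univ_eq_empty, Finset.sum_empty]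
    by_contra hne
    exact absurd hf (not_lt.mpr (Polynomial.zero_le_degree_iff.mpr hne))
  | succ n ih =>
    intro hle f hf
    have hn : n < 2 ^ r := by omega
    set c : F := f.coeff n * ((Xpoly v n).coeff n)⁻¹ with hc
    set g : Polynomial F := f - Polynomial.C c * Xpoly v n with hg
    have hlc : (Xpoly v n).coeff n ≠ 0 := Xpoly_leading hv hn (Xpoly_natDegree hv hn)
    have hgdeg : g.degree < (n : WithBot ℕ) := by
      rw [Polynomial.degree_lt_iff_coeff_zero]
      intro m hm
      rcases eq_or_lt_of_le hm with heq | hlt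
      · have hmn : (m : ℕ) = n := by exact_mod_cast heq.symm
        subst hmn
        have hcc : (Polynomial.C c * Xpoly v m).coeff m = f.coeff m := by
          rw [Polynomial.coeff_C_mul, hc, mul_assoc, inv_mul_cancel₀ hlc, mul_one]
        simp [hg, hcc]
      · have hmn : n < m := by exact_mod_cast hlt
        have h1 : f.coeff m = 0 := Polynomial.coeff_eq_zero_of_degree_lt
          (lt_of_lt_of_le hf (by exact_mod_cast hmn))
        have h2 : (Polynomial.C c * Xpoly v n).coeff m = 0 := by
          refine Polynomial.coeff_eq_zero_of_degree_lt ?_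
          calc (Polynomial.C c * Xpoly v n).degree ≤ (Xpoly v n).degree := degree_Cmul_le _ _
            _ = (n : WithBot ℕ) := Xpoly_degree hv hn
            _ < (m : WithBot ℕ) := by exact_mod_cast hmn
        simp [hg, h1, h2]
    obtain ⟨d', hd'⟩ := ih (by omega) g hgdeg
    refine ⟨Fin.snoc d' c, ?_⟩
    rw [Fin.sum_univ_castSucc]
    simp only [Fin.snoc_castSucc, Fin.snoc_last, Fin.val_last, Fin.coe_castSucc]
    rw [← hd', hg]
    ring

end Aux

/-- For every `1 ≤ h ≤ 2^r`, every `f ∈ F[X]` with `deg f < h` can be written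
in exactly one way as `f = Σ_{i<h} d_i · X_i`; i.e. `(X_0, …, X_{h-1})` is a basis of the
space of polynomials of degree less than `h`. -/
theorem statement15 (r : ℕ) (hr : 1 ≤ r) (F : Type*) [Field F] [Fintype F] [CharP F 2]
    (hcard : Fintype.card F = 2 ^ r) (v : Fin r → F)
    (hv : LinearIndependent (ZMod 2) v) (h : ℕ) (hh1 : 1 ≤ h) (hh : h ≤ 2 ^ r) :
    ∀ f : Polynomial F, f.degree < (h : WithBot ℕ) →
      ∃! d : Fin h → F, f = ∑ i : Fin h, Polynomial.C (d i) * Xpoly v (i : ℕ) := by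
  intro f hf
  obtain ⟨d, hd⟩ := exists_Xpoly_rep hv h hh f hf
  refine ⟨d, hd, fun d' hd' => ?_⟩
  have hzero : (∑ i : Fin h, Polynomial.C ((d' - d) i) * Xpoly v (i : ℕ)) = 0 := by
    have : (∑ i : Fin h, Polynomial.C ((d' - d) i) * Xpoly v (i : ℕ))
        = (∑ i : Fin h, Polynomial.C (d' i) * Xpoly v (i : ℕ))
          - ∑ i : Fin h, Polynomial.C (d i) * Xpoly v (i : ℕ) := by
      rw [← Finset.sum_sub_distrib]
      refine Finset.sum_congr rfl fun i _ => ?_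
      simp [sub_mul, Polynomial.C_sub]
    rw [this, ← hd', ← hd, sub_self]
  have := sum_Xpoly_eq_zero hv h hh (d' - d) hzero
  funext i
  have hi := this i
  simp only [Pi.sub_apply] at hi
  exact sub_eq_zero.mp hi
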